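/- With vertices of C_n labeled 1, 2, ..., n so that consecutive integers are adjacent and n is adjacent to 1, the word w' = n 1 (n−1) n (n−2)(n−1) (n−3)(n−2) ⋯ 4 5 3 4 2 3 (in which the first letters of successive pairs form the decreasing sequence n, n−1, ..., 2 and the second letters form the sequence 1, n, n−1, ..., 3) has length 2n − 2 and word-represents the cycle graph C_n for every n ≥ 4. -/

import Mathlib

variable {V : Type*}

/-- The restriction of a word `w` to the letters `x` and `y`. -/
def restrictWord [DecidableEq V] (w : List V) (x y : V) : List V :=
  w.filter fun z => decide (z = x ∨ z = y)

/-- `x` and `y` alternate in `w`: the restriction of `w` to `{x, y}` has no two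
consecutive equal letters. -/
def Alternates [DecidableEq V] (w : List V) (x y : V) : Prop :=
  (restrictWord w x y).Chain' (· ≠ ·)

/-- `w` word-represents the simple graph `G`: every vertex occurs in `w`, and two distinct
vertices are adjacent iff they alternate in `w`. -/
def Represents [DecidableEq V] (G : SimpleGraph V) (w : List V) : Prop :=
  (∀ v : V, v ∈ w) ∧ ∀ x y : V, x ≠ y → (G.Adj x y ↔ Alternates w x y)

/-- `ℓ(G)`: the minimal length of a word-representant of `G`. -/
noncomputable def minRepLength [DecidableEq V] (G : SimpleGraph V) : ℕ :=
  sInf {n | ∃ w : List V, Represents G w ∧ w.length = n}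

/-- The cycle graph `C_n` on vertex set `Fin n`, with an edge between `i` and `i + 1`
(indices modulo `n`); vertex `i : Fin n` corresponds to the vertex labeled `i` for
`1 ≤ i ≤ n - 1`, and vertex `0` corresponds to the vertex labeled `n`. -/
def cycleGraph (n : ℕ) : SimpleGraph (Fin n) :=
  SimpleGraph.fromRel fun i j => (i.val + 1) % n = j.val

/-- The word `w' = n 1 (n−1) n (n−2)(n−1) (n−3)(n−2) ⋯ 4 5 3 4 2 3`: the concatenation of
the `n − 1` pairs whose first letters form the decreasing sequence `n, n−1, …, 2` and whose
second letters form the sequence `1, n, n−1, …, 3`, written over the alphabet `Fin n` via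
the labeling `m ↦ m % n` (so the label `n` becomes the vertex `0`). -/
def cycleWord (n : ℕ) (hn : 0 < n) : List (Fin n) :=
  (List.ofFn fun j : Fin (n - 1) =>
    ([⟨(n - j.val) % n, Nat.mod_lt _ hn⟩,
      ⟨(if j.val = 0 then 1 else n - j.val + 1) % n, Nat.mod_lt _ hn⟩] : List (Fin n))).flatten

section Helpers

open List

private lemma flatten_map_eq_nil {α : Type*} {g : ℕ → List α} {l : List ℕ}
    (h : ∀ i ∈ l, g i = []) : (l.map g).flatten = [] := by
  induction l with
  | nil => rfl
  | cons a l ih =>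
      simp only [map_cons, flatten_cons, h a mem_cons_self,
        ih fun i hi => h i (mem_cons_of_mem _ hi), nil_append]

private lemma flatten_range_split {α : Type*} (g : ℕ → List α) {a b : ℕ} (h : a ≤ b) :
    ((range b).map g).flatten
      = ((range a).map g).flatten ++ ((range (b - a)).map fun i => g (a + i)).flatten := by
  conv_lhs => rw [show b = a + (b - a) by omega, range_add]
  rw [map_append, flatten_append, map_map]
  rfl

private lemma flatten_range_supported {α : Type*} (g : ℕ → List α) {m c : ℕ} (hc : c ≤ m)
    (h : ∀ i < c, g i = []) :
    ((range m).map g).flatten = ((range (m - c)).map fun i => g (c + i)).flatten := by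
  rw [flatten_range_split g hc,
    flatten_map_eq_nil (fun i hi => h i (by simpa using hi)), nil_append]

private lemma flatten_one {α : Type*} (f : ℕ → List α) :
    ((range 1).map f).flatten = f 0 := by
  simp [range_succ]

private lemma flatten_two {α : Type*} (f : ℕ → List α) :
    ((range 2).map f).flatten = f 0 ++ f 1 := by
  simp [range_succ]

private lemma flatten_three {α : Type*} (f : ℕ → List α) :
    ((range 3).map f).flatten = f 0 ++ (f 1 ++ f 2) := by
  simp [range_succ]

private lemma flatten_range_peel {α : Type*} (g : ℕ → List α) {m : ℕ} (hm : 0 < m) :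
    ((range m).map g).flatten = g 0 ++ ((range (m - 1)).map fun i => g (1 + i)).flatten := by
  rw [flatten_range_split g (show 1 ≤ m by omega)]
  congr 1
  simpa using flatten_one g

private lemma flatten_range_window {α : Type*} (g : ℕ → List α) {m : ℕ} (c k : ℕ)
    (h1 : c + k ≤ m)
    (hlo : ∀ i < c, g i = []) (hhi : ∀ i, c + k ≤ i → i < m → g i = []) :
    ((range m).map g).flatten = ((range k).map fun i => g (c + i)).flatten := by
  rw [flatten_range_supported g (show c ≤ m by omega) hlo,
    flatten_range_split _ (show k ≤ m - c by omega)]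
  have hz : ((range (m - c - k)).map fun i => g (c + (k + i))).flatten = ([] : List α) :=
    flatten_map_eq_nil fun i hi =>
      hhi (c + (k + i)) (by omega) (by simp only [mem_range] at hi; omega)
  rw [hz, append_nil]

private lemma not_chain'_ne {α : Type*} (X Y : List α) (c : α) :
    ¬ (X ++ c :: c :: Y).Chain' (· ≠ ·) := fun h =>
  (List.isChain_cons_cons.mp (List.isChain_append.mp h).2.1).1 rfl

private def natPair (n i : ℕ) : List ℕ :=
  [if i = 0 then 0 else n - i, if i = 0 then 1 else if i = 1 then 0 else n - i + 1]

private def natG (n a b i : ℕ) : List ℕ :=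
  if i < n - 1 then (natPair n i).filter (fun z => decide (z = a ∨ z = b)) else []

private lemma filter_pair (a b u v : ℕ) :
    List.filter (fun z => decide (z = a ∨ z = b)) [u, v]
      = (if u = a ∨ u = b then [u] else []) ++ (if v = a ∨ v = b then [v] else []) := by
  by_cases h1 : u = a ∨ u = b <;> by_cases h2 : v = a ∨ v = b <;>
    simp [List.filter_cons, h1, h2]

private lemma natG_eval (n a b i u v : ℕ) (hi : i < n - 1)
    (hu : u = if i = 0 then 0 else n - i)
    (hv : v = if i = 0 then 1 else if i = 1 then 0 else n - i + 1) :
    natG n a b i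
      = (if u = a ∨ u = b then [u] else []) ++ (if v = a ∨ v = b then [v] else []) := by
  subst hu hv
  rw [natG, if_pos hi, natPair, filter_pair]

private lemma natG_nil (n a b i : ℕ)
    (h : ∀ u v : ℕ, u = (if i = 0 then 0 else n - i) →
      v = (if i = 0 then 1 else if i = 1 then 0 else n - i + 1) →
      u ≠ a ∧ u ≠ b ∧ v ≠ a ∧ v ≠ b) :
    natG n a b i = [] := by
  rw [natG]
  split
  · apply List.filter_eq_nil_iff.mpr
    intro z hz
    obtain ⟨h1, h2, h3, h4⟩ := h _ _ rfl rfl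
    simp only [natPair, List.mem_cons, List.not_mem_nil, or_false] at hz
    simp only [decide_eq_true_eq]
    rcases hz with rfl | rfl
    · rintro (rfl | rfl) <;> simp_all
    · rintro (rfl | rfl) <;> simp_all
  · rfl

private lemma map_val_filter {n : ℕ} (x y : Fin n) (l : List (Fin n)) :
    ((l.filter fun z => decide (z = x ∨ z = y)).map Fin.val)
      = (l.map Fin.val).filter fun z => decide (z = x.val ∨ z = y.val) := by
  induction l with
  | nil => rfl
  | cons u l ih =>
      rw [List.filter_cons, List.map_cons, List.filter_cons]
      by_cases h : u.val = x.val ∨ u.val = y.val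
      · rw [if_pos (decide_eq_true (show u = x ∨ u = y by simpa [Fin.ext_iff] using h)),
          if_pos (decide_eq_true h), List.map_cons, ih]
      · have h' : ¬(u = x ∨ u = y) := by simpa [Fin.ext_iff] using h
        rw [if_neg (fun hc => h' (of_decide_eq_true hc)),
          if_neg (fun hc => h (of_decide_eq_true hc)), ih]

private lemma restrict_cycleWord {n : ℕ} (hn : 4 ≤ n) (h0 : 0 < n) (x y : Fin n) :
    ((restrictWord (cycleWord n h0) x y).map Fin.val)
      = ((List.range (n - 1)).map (natG n x.val y.val)).flatten := by
  unfold restrictWord cycleWord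
  rw [List.filter_flatten, List.map_flatten, List.map_map]
  congr 1
  rw [List.map_ofFn]
  apply List.ext_getElem
  · simp
  · intro i h1 h2
    have hi : i < n - 1 := by simpa using h1
    simp only [List.getElem_ofFn, Function.comp_apply, List.getElem_map, List.getElem_range]
    rw [map_val_filter, natG, if_pos hi]
    show List.filter _ [(n - i) % n, (if i = 0 then 1 else n - i + 1) % n] = _
    congr 1
    rcases Nat.eq_zero_or_pos i with rfl | hpos
    · simp [natPair, Nat.mod_self, Nat.mod_eq_of_lt (show 1 < n by omega)]
    · rcases eq_or_ne i 1 with rfl | hne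
      · simp [natPair, Nat.mod_eq_of_lt (show n - 1 < n by omega),
          show n - 1 + 1 = n by omega, Nat.mod_self]
      · simp [natPair, hpos.ne', hne, Nat.mod_eq_of_lt (show n - i < n by omega),
          Nat.mod_eq_of_lt (show n - i + 1 < n by omega)]

private lemma alternates_iff_nat {n : ℕ} (w : List (Fin n)) (x y : Fin n) :
    Alternates w x y ↔ ((restrictWord w x y).map Fin.val).Chain' (· ≠ ·) := by
  unfold Alternates
  rw [List.Chain', List.Chain', List.isChain_map]
  exact ⟨fun h => h.imp fun _ _ hab h' => hab (Fin.val_injective h'),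
    fun h => h.imp fun _ _ hab h' => hab (congrArg Fin.val h')⟩

private lemma alternates_comm [DecidableEq V] (w : List V) (x y : V) :
    Alternates w x y ↔ Alternates w y x := by
  unfold Alternates restrictWord
  rw [show (fun z : V => decide (z = x ∨ z = y)) = (fun z => decide (z = y ∨ z = x)) from
    funext fun z => decide_eq_decide.mpr or_comm]

private lemma cycle_adj_iff {n : ℕ} (hn : 4 ≤ n) (x y : Fin n) (hab : x.val < y.val) :
    (cycleGraph n).Adj x y ↔ (y.val = x.val + 1 ∨ (x.val = 0 ∧ y.val = n - 1)) := by
  have hx := x.isLt; have hy := y.isLt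
  rw [cycleGraph, SimpleGraph.fromRel_adj]
  constructor
  · rintro ⟨-, h | h⟩
    · rw [Nat.mod_eq_of_lt (by omega)] at h; omega
    · rcases Nat.lt_or_ge (y.val + 1) n with h' | h'
      · rw [Nat.mod_eq_of_lt h'] at h; omega
      · rw [show y.val + 1 = n by omega, Nat.mod_self] at h; omega
  · rintro (h | ⟨h0, h1⟩)
    · exact ⟨Fin.ne_of_val_ne (by omega), Or.inl (by rw [Nat.mod_eq_of_lt (by omega)]; omega)⟩
    · exact ⟨Fin.ne_of_val_ne (by omega),
        Or.inr (by rw [show y.val + 1 = n by omega, Nat.mod_self]; omega)⟩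

private lemma key {n : ℕ} (hn : 4 ≤ n) (h0 : 0 < n) (x y : Fin n) (hab : x.val < y.val) :
    (cycleGraph n).Adj x y ↔ Alternates (cycleWord n h0) x y := by
  rw [cycle_adj_iff hn x y hab, alternates_iff_nat, restrict_cycleWord hn h0 x y]
  have hbn := y.isLt
  set a := x.val with hA
  set b := y.val with hB
  clear_value a b
  clear hA hB x y
  rcases Nat.eq_zero_or_pos a with rfl | ha1
  · rcases eq_or_lt_of_le (show 1 ≤ b by omega) with hb1 | hb2
    · -- a = 0, b = 1
      rw [flatten_range_window (natG n 0 b) 0 2 (by omega)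
          (fun i hi => absurd hi (by omega))
          (fun i h1 h2 => natG_nil n 0 b i fun u v hu hv => by split_ifs at hu hv <;> first | contradiction | omega),
        flatten_two]
      simp only [Nat.zero_add, Nat.add_zero]
      rw [natG_eval n 0 b 0 0 1 (by omega) (by split_ifs <;> first | contradiction | omega) (by split_ifs <;> first | contradiction | omega),
        natG_eval n 0 b 1 (n - 1) 0 (by omega) (by split_ifs <;> first | contradiction | omega)
          (by split_ifs <;> first | contradiction | omega)]
      rw [if_pos (show (0:ℕ) = 0 ∨ 0 = b by omega),
        if_pos (show (1:ℕ) = 0 ∨ 1 = b by omega),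
        if_neg (show ¬(n - 1 = 0 ∨ n - 1 = b) by omega)]
      refine iff_of_true (by omega) ?_
      simp only [List.nil_append, List.append_nil, List.cons_append, List.singleton_append,
        List.Chain', List.isChain_cons_cons, List.isChain_singleton, ne_eq, and_true]
      omega
    · by_cases hbn1 : b = n - 1
      · -- a = 0, b = n - 1
        rw [flatten_range_window (natG n 0 b) 0 3 (by omega)
            (fun i hi => absurd hi (by omega))
            (fun i h1 h2 => natG_nil n 0 b i fun u v hu hv => by split_ifs at hu hv <;> first | contradiction | omega),
          flatten_three]
        simp only [Nat.zero_add, Nat.add_zero]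
        rw [natG_eval n 0 b 0 0 1 (by omega) (by split_ifs <;> first | contradiction | omega) (by split_ifs <;> first | contradiction | omega),
          natG_eval n 0 b 1 b 0 (by omega) (by split_ifs <;> first | contradiction | omega) (by split_ifs <;> first | contradiction | omega),
          natG_eval n 0 b 2 (n - 2) b (by omega) (by split_ifs <;> first | contradiction | omega)
            (by split_ifs <;> first | contradiction | omega)]
        rw [if_pos (show (0:ℕ) = 0 ∨ 0 = b by omega),
          if_neg (show ¬((1:ℕ) = 0 ∨ 1 = b) by omega),
          if_pos (show b = 0 ∨ b = b by omega),
          if_neg (show ¬(n - 2 = 0 ∨ n - 2 = b) by omega)]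
        refine iff_of_true (Or.inr ⟨by simp, by omega⟩) ?_
        simp only [List.nil_append, List.append_nil, List.cons_append, List.singleton_append,
          List.Chain', List.isChain_cons_cons, List.isChain_singleton, ne_eq, and_true]
        omega
      · -- a = 0, 2 ≤ b ≤ n - 2
        rw [flatten_range_peel (natG n 0 b) (show 0 < n - 1 by omega),
          flatten_range_peel (fun i => natG n 0 b (1 + i)) (show 0 < n - 1 - 1 by omega)]
        simp only [Nat.zero_add, Nat.add_zero]
        rw [natG_eval n 0 b 0 0 1 (by omega) (by split_ifs <;> first | contradiction | omega) (by split_ifs <;> first | contradiction | omega),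
          natG_eval n 0 b 1 (n - 1) 0 (by omega) (by split_ifs <;> first | contradiction | omega)
            (by split_ifs <;> first | contradiction | omega)]
        rw [if_pos (show (0:ℕ) = 0 ∨ 0 = b by omega),
          if_neg (show ¬((1:ℕ) = 0 ∨ 1 = b) by omega),
          if_neg (show ¬(n - 1 = 0 ∨ n - 1 = b) by omega)]
        refine iff_of_false (by omega) ?_
        simp only [List.nil_append, List.append_nil, List.cons_append, List.singleton_append]
        exact not_chain'_ne [] _ 0
  · by_cases hba : b = a + 1
    · rcases eq_or_lt_of_le (show 1 ≤ a from ha1) with ha1' | ha2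
      · -- a = 1, b = 2
        rw [flatten_range_peel (natG n a b) (show 0 < n - 1 by omega),
          flatten_range_supported (fun i => natG n a b (1 + i))
            (show n - 3 ≤ n - 1 - 1 by omega)
            (fun i hi => natG_nil n a b (1 + i) fun u v hu hv => by
              split_ifs at hu hv <;> first | contradiction | omega),
          show n - 1 - 1 - (n - 3) = 1 by omega, flatten_one]
        simp only [Nat.zero_add, Nat.add_zero]
        rw [show 1 + (n - 3) = n - 2 by omega]
        rw [natG_eval n a b 0 0 1 (by omega) (by split_ifs <;> first | contradiction | omega) (by split_ifs <;> first | contradiction | omega),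
          natG_eval n a b (n - 2) 2 3 (by omega) (by split_ifs <;> first | contradiction | omega)
            (by split_ifs <;> first | contradiction | omega)]
        rw [if_neg (show ¬((0:ℕ) = a ∨ 0 = b) by omega),
          if_pos (show (1:ℕ) = a ∨ 1 = b by omega),
          if_pos (show (2:ℕ) = a ∨ 2 = b by omega),
          if_neg (show ¬((3:ℕ) = a ∨ 3 = b) by omega)]
        refine iff_of_true (by omega) ?_
        simp only [List.nil_append, List.append_nil, List.cons_append, List.singleton_append,
          List.Chain', List.isChain_cons_cons, List.isChain_singleton, ne_eq, and_true]
        omega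
      · rcases eq_or_lt_of_le (show 2 ≤ a by omega) with ha2' | ha3
        · -- a = 2, b = 3
          rw [flatten_range_window (natG n a b) (n - b) 2 (by omega)
              (fun i hi => natG_nil n a b i fun u v hu hv => by
                split_ifs at hu hv <;> first | contradiction | omega)
              (fun i h1 h2 => natG_nil n a b i fun u v hu hv => by
                split_ifs at hu hv <;> first | contradiction | omega),
            flatten_two]
          simp only [Nat.zero_add, Nat.add_zero]
          rw [natG_eval n a b (n - b) b (if b = n - 1 then 0 else b + 1) (by omega)
              (by split_ifs <;> first | contradiction | omega) (by split_ifs <;> first | contradiction | omega),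
            natG_eval n a b (n - b + 1) a b (by omega) (by split_ifs <;> first | contradiction | omega)
              (by split_ifs <;> first | contradiction | omega)]
          rw [if_pos (show b = a ∨ b = b by omega),
            if_neg (show ¬((if b = n - 1 then 0 else b + 1) = a ∨
              (if b = n - 1 then 0 else b + 1) = b) by split_ifs <;> first | contradiction | omega),
            if_pos (show a = a ∨ a = b by omega)]
          refine iff_of_true (by omega) ?_
          simp only [List.nil_append, List.append_nil, List.cons_append, List.singleton_append,
            List.Chain', List.isChain_cons_cons, List.isChain_singleton, ne_eq, and_true]
          omega
        · -- 3 ≤ a, b = a + 1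
          rw [flatten_range_window (natG n a b) (n - b) 3 (by omega)
              (fun i hi => natG_nil n a b i fun u v hu hv => by
                split_ifs at hu hv <;> first | contradiction | omega)
              (fun i h1 h2 => natG_nil n a b i fun u v hu hv => by
                split_ifs at hu hv <;> first | contradiction | omega),
            flatten_three]
          simp only [Nat.zero_add, Nat.add_zero]
          rw [natG_eval n a b (n - b) b (if b = n - 1 then 0 else b + 1) (by omega)
              (by split_ifs <;> first | contradiction | omega) (by split_ifs <;> first | contradiction | omega),
            natG_eval n a b (n - b + 1) a b (by omega) (by split_ifs <;> first | contradiction | omega)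
              (by split_ifs <;> first | contradiction | omega),
            natG_eval n a b (n - b + 2) (a - 1) a (by omega) (by split_ifs <;> first | contradiction | omega)
              (by split_ifs <;> first | contradiction | omega)]
          rw [if_pos (show b = a ∨ b = b by omega),
            if_neg (show ¬((if b = n - 1 then 0 else b + 1) = a ∨
              (if b = n - 1 then 0 else b + 1) = b) by split_ifs <;> first | contradiction | omega),
            if_pos (show a = a ∨ a = b by omega),
            if_neg (show ¬(a - 1 = a ∨ a - 1 = b) by omega)]
          refine iff_of_true (by omega) ?_
          simp only [List.nil_append, List.append_nil, List.cons_append, List.singleton_append,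
            List.Chain', List.isChain_cons_cons, List.isChain_singleton, ne_eq, and_true]
          omega
    · -- 1 ≤ a, a + 2 ≤ b
      rw [flatten_range_split (natG n a b) (show n - b ≤ n - 1 by omega),
        flatten_range_peel (fun i => natG n a b (n - b + i))
          (show 0 < n - 1 - (n - b) by omega),
        flatten_range_peel (fun i => natG n a b (n - b + (1 + i)))
          (show 0 < n - 1 - (n - b) - 1 by omega)]
      simp only [Nat.zero_add, Nat.add_zero]
      rw [natG_eval n a b (n - b) b (if b = n - 1 then 0 else b + 1) (by omega)
          (by split_ifs <;> first | contradiction | omega) (by split_ifs <;> first | contradiction | omega),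
        natG_eval n a b (n - b + 1) (b - 1) b (by omega) (by split_ifs <;> first | contradiction | omega)
          (by split_ifs <;> first | contradiction | omega)]
      rw [if_pos (show b = a ∨ b = b by omega),
        if_neg (show ¬((if b = n - 1 then 0 else b + 1) = a ∨
          (if b = n - 1 then 0 else b + 1) = b) by split_ifs <;> first | contradiction | omega),
        if_neg (show ¬(b - 1 = a ∨ b - 1 = b) by omega)]
      refine iff_of_false (by omega) ?_
      simp only [List.nil_append, List.append_nil, List.cons_append, List.singleton_append]
      exact not_chain'_ne _ _ b

end Helpers

private lemma cycleWord_length {n : ℕ} (h0 : 0 < n) :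
    (cycleWord n h0).length = 2 * n - 2 := by
  unfold cycleWord
  rw [List.length_flatten, List.map_ofFn]
  have : ((List.length ∘ fun j : Fin (n - 1) =>
      ([⟨(n - j.val) % n, Nat.mod_lt _ h0⟩,
        ⟨(if j.val = 0 then 1 else n - j.val + 1) % n, Nat.mod_lt _ h0⟩] : List (Fin n)))) =
      fun _ => 2 := by
    funext j; rfl
  rw [this, List.ofFn_const, List.sum_replicate, smul_eq_mul]
  omega

private lemma cycleWord_mem {n : ℕ} (hn : 4 ≤ n) (h0 : 0 < n) (v : Fin n) :
    v ∈ cycleWord n h0 := by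
  unfold cycleWord
  rw [List.mem_flatten]
  have hv := v.isLt
  by_cases h : v.val ≤ 1
  · refine ⟨_, List.mem_ofFn.mpr ⟨⟨0, by omega⟩, rfl⟩, ?_⟩
    rcases Nat.lt_or_ge v.val 1 with h1 | h1
    · exact List.mem_cons.mpr (Or.inl (Fin.ext (show v.val = (n - 0) % n by
        rw [Nat.sub_zero, Nat.mod_self]; omega)))
    · exact List.mem_cons.mpr (Or.inr (List.mem_cons.mpr (Or.inl (Fin.ext
        (show v.val = (if (0:ℕ) = 0 then 1 else n - 0 + 1) % n by
          rw [if_pos rfl, Nat.mod_eq_of_lt (show 1 < n by omega)]; omega)))))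
  · refine ⟨_, List.mem_ofFn.mpr ⟨⟨n - v.val, by omega⟩, rfl⟩, ?_⟩
    exact List.mem_cons.mpr (Or.inl (Fin.ext (show v.val = (n - (n - v.val)) % n by
      rw [show n - (n - v.val) = v.val by omega, Nat.mod_eq_of_lt hv])))

/-- For every `n ≥ 4`, the word
`w' = n 1 (n−1) n (n−2)(n−1) (n−3)(n−2) ⋯ 4 5 3 4 2 3` has length `2n − 2` and
word-represents the cycle graph `C_n`. -/
theorem cycle_explicit_word (n : ℕ) (hn : 4 ≤ n) :
    (cycleWord n (by omega)).length = 2 * n - 2 ∧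
    Represents (cycleGraph n) (cycleWord n (by omega)) := by
  refine ⟨cycleWord_length _, cycleWord_mem hn _, fun x y hxy => ?_⟩
  rcases lt_trichotomy x.val y.val with h | h | h
  · exact key hn _ x y h
  · exact absurd (Fin.ext h) hxy
  · rw [SimpleGraph.adj_comm, alternates_comm]
    exact key hn _ y x h
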